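/- Let n, h ∈ ℕ, let P ∈ ℝ^{n×n} be symmetric positive definite, and let b_1, …, b_h ∈ ℝ^n be such that, for every j ∈ {1, …, h}, the (1+n)×(1+n) block matrix [[1, b_jᵀP⁻¹],[P⁻¹b_j, P⁻¹]] is positive semidefinite. Let x : ℕ → ℝ^n and η : ℕ → ℝ be sequences with η_k ≥ 0 for all k, such that the sequence W_k = x_kᵀP·x_k + η_k is nonincreasing and W_0 ≤ 1. Then for every k ∈ ℕ and every j ∈ {1, …, h}, b_jᵀx_k ≤ 1; that is, x_k remains for all time in the polyhedron D_x = {x ∈ ℝ^n : b_jᵀx ≤ 1 for all j ∈ {1, …, h}}. -/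

import Mathlib

open Matrix

/-- Forward-invariance conclusion of Theorem 1: if the LMIs
`[[1, b_jᵀP⁻¹],[P⁻¹b_j, P⁻¹]] ⪰ 0` hold, `η_k ≥ 0`, and
`W_k = x_kᵀP x_k + η_k` is nonincreasing with `W_0 ≤ 1`, then the state never
leaves the polyhedron `D_x = {x : b_jᵀx ≤ 1 ∀j}`. -/
theorem trajectories_stay_in_polyhedron {n h : ℕ}
    (P : Matrix (Fin n) (Fin n) ℝ) (hP : P.PosDef)
    (b : Fin h → Fin n → ℝ)
    (hLMI : ∀ j : Fin h, (Matrix.fromBlocks (1 : Matrix (Fin 1) (Fin 1) ℝ)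
        (Matrix.replicateRow (Fin 1) ((b j) ᵥ* P⁻¹)) (Matrix.replicateCol (Fin 1) (P⁻¹ *ᵥ (b j)))
        P⁻¹).PosSemidef)
    (x : ℕ → Fin n → ℝ) (η : ℕ → ℝ)
    (hη : ∀ k, 0 ≤ η k)
    (hW : Antitone fun k => x k ⬝ᵥ (P *ᵥ x k) + η k)
    (hW0 : x 0 ⬝ᵥ (P *ᵥ x 0) + η 0 ≤ 1) :
    ∀ (k : ℕ) (j : Fin h), b j ⬝ᵥ x k ≤ 1 := by
  intro k j
  have hdet : IsUnit P.det := isUnit_iff_ne_zero.mpr hP.det_pos.ne'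
  have hPx : x k ⬝ᵥ (P *ᵥ x k) ≤ 1 := by
    have h1 := hW (Nat.zero_le k)
    have h2 := hη k
    simp only at h1
    linarith
  have hinv : P⁻¹ *ᵥ (P *ᵥ x k) = x k := by
    rw [Matrix.mulVec_mulVec, Matrix.nonsing_inv_mul _ hdet, Matrix.one_mulVec]
  have hinv2 : P *ᵥ (P⁻¹ *ᵥ b j) = b j := by
    rw [Matrix.mulVec_mulVec, Matrix.mul_nonsing_inv _ hdet, Matrix.one_mulVec]
  have hq := (hLMI j).dotProduct_mulVec_nonneg (Sum.elim (fun _ : Fin 1 => (-1 : ℝ)) (P *ᵥ x k))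
  have hcol : Matrix.replicateCol (Fin 1) (P⁻¹ *ᵥ b j) *ᵥ (fun _ : Fin 1 => (-1 : ℝ))
      = -(P⁻¹ *ᵥ b j) := by
    ext i
    simp [Matrix.mulVec, Matrix.replicateCol, dotProduct]
  simp only [Matrix.fromBlocks_mulVec, star_trivial, sumElim_dotProduct_sumElim,
    Sum.elim_comp_inl, Sum.elim_comp_inr, Matrix.one_mulVec, Matrix.replicateRow_mulVec_eq_const,
    hcol, hinv, dotProduct_add, dotProduct_neg] at hq
  have e1 : (fun _ : Fin 1 => (-1 : ℝ)) ⬝ᵥ (fun _ : Fin 1 => (-1 : ℝ)) = 1 := by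
    simp [dotProduct]
  have e0 : (b j ᵥ* P⁻¹) ⬝ᵥ (P *ᵥ x k) = b j ⬝ᵥ x k := by
    rw [dotProduct_mulVec, Matrix.vecMul_vecMul, Matrix.nonsing_inv_mul _ hdet,
      Matrix.vecMul_one]
  have e2 : (fun _ : Fin 1 => (-1 : ℝ)) ⬝ᵥ
      Function.const (Fin 1) ((b j ᵥ* P⁻¹) ⬝ᵥ (P *ᵥ x k)) = -(b j ⬝ᵥ x k) := by
    rw [e0]; simp [dotProduct]
  have hPt : Pᵀ = P := (by simpa using hP.isHermitian : P.IsSymm)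
  have e3 : (P *ᵥ x k) ⬝ᵥ (P⁻¹ *ᵥ b j) = b j ⬝ᵥ x k := by
    rw [dotProduct_comm, dotProduct_mulVec, ← Matrix.mulVec_transpose, hPt, hinv2]
  have e4 : (P *ᵥ x k) ⬝ᵥ x k = x k ⬝ᵥ (P *ᵥ x k) := dotProduct_comm _ _
  rw [e1, e2, e3, e4] at hq
  linarith
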